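/- Let C be a small category with a terminal object 1 and let F be a presheaf of sets on C. Define G(X) as the image of the canonical map F(X) → Set(Hom_C(1,X), F(1)). Then G is a concrete presheaf, the quotient map q : F → G is a morphism of presheaves, and q is universal among morphisms from F to concrete presheaves: every morphism F → H with H concrete factors uniquely through q. -/

import Mathlib

open CategoryTheory CategoryTheory.Limits Opposite

/-- A presheaf of sets `H` on a category with terminal object `T` is *concrete* if for
every object `X` the canonical map `H(X) → Set(Hom(T, X), H(T))` is injective. -/
def IsConcretePresheaf {C : Type} [SmallCategory C] (T : C) (H : Cᵒᵖ ⥤ Type) : Prop :=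
  ∀ X : C, Function.Injective (fun (s : H.obj (op X)) => fun (p : T ⟶ X) => H.map p.op s)

variable {C : Type} [SmallCategory C]

/-- The concretization `G` of a presheaf `F`: `G(X)` is the image of the canonical map
`F(X) → Set(Hom(T, X), F(T))`. -/
def concretization (T : C) (F : Cᵒᵖ ⥤ Type) : Cᵒᵖ ⥤ Type where
  obj X := { φ : (T ⟶ X.unop) → F.obj (op T) // ∃ s : F.obj X, ∀ p, φ p = F.map p.op s }
  map {X Y} f := TypeCat.ofHom fun φ => ⟨fun p => φ.1 (p ≫ f.unop), by
    obtain ⟨s, hs⟩ := φ.2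
    refine ⟨F.map f s, fun p => ?_⟩
    show φ.1 (p ≫ f.unop) = _
    rw [hs (p ≫ f.unop)]
    have h1 : (p ≫ f.unop).op = f ≫ p.op := rfl
    rw [h1, FunctorToTypes.map_comp_apply]⟩
  map_id X := by
    ext φ x
    simp
  map_comp {X Y Z} f g := by
    ext φ x
    simp

/-- Auxiliary: if a morphism into a concrete presheaf agrees after evaluation at all
points, it agrees. -/
lemma concrete_eq {T : C} {F H : Cᵒᵖ ⥤ Type} (hH : IsConcretePresheaf T H) (η : F ⟶ H)
    (X : Cᵒᵖ) (s t : F.obj X) (h : ∀ p : T ⟶ X.unop, F.map p.op s = F.map p.op t) :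
    η.app X s = η.app X t := by
  apply hH X.unop
  funext p
  show H.map p.op (η.app X s) = H.map p.op (η.app X t)
  rw [← FunctorToTypes.naturality, ← FunctorToTypes.naturality, h p]

/-- Let `C` be a small category with a terminal object `T` and `F` a
presheaf of sets on `C`.  The concretization `G` of `F` (with `G(X)` the image of
`F(X) → Set(Hom(T,X), F(T))`) is a concrete presheaf, the quotient maps
`F(X) → G(X)` assemble into a morphism of presheaves `q : F ⟶ G`, and `q` is universal
among morphisms from `F` to concrete presheaves: every morphism `F ⟶ H` with `H` concrete
factors uniquely through `q`. -/
theorem concretization_is_reflection (T : C) (hT : IsTerminal T) (F : Cᵒᵖ ⥤ Type) :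
    IsConcretePresheaf T (concretization T F) ∧
    ∃ q : F ⟶ concretization T F,
      (∀ (X : Cᵒᵖ) (s : F.obj X), (q.app X s).1 = fun p : T ⟶ X.unop => F.map p.op s) ∧
      ∀ (H : Cᵒᵖ ⥤ Type), IsConcretePresheaf T H →
        ∀ η : F ⟶ H, ∃! η' : concretization T F ⟶ H, q ≫ η' = η := by
  constructor
  · -- concreteness
    intro X φ ψ h
    apply Subtype.ext
    funext p
    have := congrFun h p
    have h2 : φ.1 (𝟙 T ≫ p) = ψ.1 (𝟙 T ≫ p) := congrFun (congrArg Subtype.val this) (𝟙 T)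
    simpa using h2
  · refine ⟨{ app := fun X => TypeCat.ofHom fun s => ⟨fun p => F.map p.op s, s, fun p => rfl⟩,
              naturality := fun X Y f => ?_ }, fun X s => rfl, ?_⟩
    · ext s
      apply Subtype.ext
      funext p
      have h1 : (p ≫ f.unop).op = f ≫ p.op := rfl
      have : F.map (p ≫ f.unop).op s = F.map p.op (F.map f s) := by
        rw [h1, FunctorToTypes.map_comp_apply]
      exact this.symm
    · intro H hH η
      -- q is surjective componentwise
      have hq : ∀ (X : Cᵒᵖ) (φ : (concretization T F).obj X),
          (⟨fun p => F.map p.op φ.2.choose, φ.2.choose, fun p => rfl⟩ :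
            (concretization T F).obj X) = φ := by
        intro X φ
        apply Subtype.ext
        funext p
        exact (φ.2.choose_spec p).symm
      refine ⟨{ app := fun X => TypeCat.ofHom fun φ => η.app X φ.2.choose,
                naturality := fun X Y f => ?_ }, ?_, ?_⟩
      · ext φ
        show η.app Y ((concretization T F).map f φ).2.choose = H.map f (η.app X φ.2.choose)
        rw [← FunctorToTypes.naturality]
        apply concrete_eq hH η
        intro p
        have h1 := ((concretization T F).map f φ).2.choose_spec p
        have h2 : ((concretization T F).map f φ).1 p = φ.1 (p ≫ f.unop) := rfl
        have h3 := φ.2.choose_spec (p ≫ f.unop)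
        have h4 : (p ≫ f.unop).op = f ≫ p.op := rfl
        rw [← h1, h2, h3, h4, FunctorToTypes.map_comp_apply]
      · ext X s
        show η.app X _ = η.app X s
        apply concrete_eq hH η
        intro p
        exact (Exists.choose_spec (p := fun t => ∀ p, (fun p => F.map p.op s) p = F.map p.op t)
          ⟨s, fun p => rfl⟩ p).symm
      · intro η'' hη''
        ext X φ
        show η''.app X φ = η.app X φ.2.choose
        have h5 : η''.app X ⟨fun p => F.map p.op φ.2.choose, φ.2.choose, fun p => rfl⟩ =
            η.app X φ.2.choose :=
          congrArg (fun g : F ⟶ H => g.app X φ.2.choose) hη''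
        rw [hq X φ] at h5
        exact h5
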